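/- Let P : ℝⁿ → ℝ be continuously differentiable with gradient ∇P, let {x_k}_{k≥0} ⊆ ℝⁿ, β̲ > 0, Γ > 0, and assume: (i) P(x_{k+1}) ≤ P(x_k) − (β̲/2)‖x_{k+1} − x_k‖² for all k ≥ 0; (ii) P(x_k) decreases to P* ∈ ℝ and E_k = P(x_k) − P* > 0 for all k; (iii) ‖∇P(x_k)‖ ≤ Γ‖x_k − x_{k−1}‖ for all k ≥ 1; (iv) x_k → x*; (v) there exist k₁ ≥ 1, τ > 0 and a continuous concave φ : [0, τ) → [0, ∞) with φ(0) = 0, continuously differentiable on (0, τ) with φ' > 0, such that for all k ≥ k₁: E_k < τ and φ'(E_k)·‖∇P(x_k)‖ ≥ 1. Then there exists C > 0 such that for all k ≥ k₁: ‖x_k − x*‖ ≤ C·max{φ(E_k), √(E_{k−1})}; in fact, for any θ > Γ, setting δ₀ = 1 − Γ/θ, one may take C = θ/(β̲ δ₀) + (Γ/(θ δ₀))·√(2/β̲). -/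

import Mathlib

open Filter Topology

set_option maxHeartbeats 1600000

/-- Distance estimate to the limit point under the KL property: with
`E_k = P(x_k) − P*`, there exists `C > 0` such that `‖x_k − x*‖ ≤ C·max{φ(E_k), √E_{k−1}}`
for all `k ≥ k₁`; in fact, for any `θ > Γ` and `δ₀ = 1 − Γ/θ`, one may take
`C = θ/(β̲δ₀) + (Γ/(θδ₀))√(2/β̲)`. -/
theorem lqp_distance_estimate_KL {n : ℕ}
    (P : EuclideanSpace ℝ (Fin n) → ℝ) (hP : ContDiff ℝ 1 P)
    (x : ℕ → EuclideanSpace ℝ (Fin n))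
    (βlb Γ : ℝ) (hβlb : 0 < βlb) (hΓ : 0 < Γ)
    (hdesc : ∀ k : ℕ, P (x (k + 1)) ≤ P (x k) - βlb / 2 * ‖x (k + 1) - x k‖ ^ 2)
    (Pstar : ℝ)
    (hmono : ∀ k : ℕ, P (x (k + 1)) ≤ P (x k))
    (hconv : Tendsto (fun k : ℕ => P (x k)) atTop (𝓝 Pstar))
    (hpos : ∀ k : ℕ, 0 < P (x k) - Pstar)
    (hgrad : ∀ k : ℕ, 1 ≤ k → ‖gradient P (x k)‖ ≤ Γ * ‖x k - x (k - 1)‖)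
    (xstar : EuclideanSpace ℝ (Fin n)) (hlim : Tendsto x atTop (𝓝 xstar))
    (k₁ : ℕ) (hk₁ : 1 ≤ k₁) (τ : ℝ) (hτ : 0 < τ)
    (φ φ' : ℝ → ℝ)
    (hφcont : ContinuousOn φ (Set.Ico 0 τ))
    (hφconc : ConcaveOn ℝ (Set.Ico 0 τ) φ)
    (hφ0 : φ 0 = 0)
    (hφnonneg : ∀ s ∈ Set.Ico (0 : ℝ) τ, 0 ≤ φ s)
    (hφderiv : ∀ s ∈ Set.Ioo (0 : ℝ) τ, HasDerivAt φ (φ' s) s)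
    (hφ'pos : ∀ s ∈ Set.Ioo (0 : ℝ) τ, 0 < φ' s)
    (hKL : ∀ k : ℕ, k₁ ≤ k →
        P (x k) - Pstar < τ ∧ 1 ≤ φ' (P (x k) - Pstar) * ‖gradient P (x k)‖) :
    (∃ C : ℝ, 0 < C ∧ ∀ k : ℕ, k₁ ≤ k →
        ‖x k - xstar‖ ≤
          C * max (φ (P (x k) - Pstar)) (Real.sqrt (P (x (k - 1)) - Pstar))) ∧
    (∀ θ : ℝ, Γ < θ → ∀ k : ℕ, k₁ ≤ k →
        ‖x k - xstar‖ ≤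
          (θ / (βlb * (1 - Γ / θ)) + Γ / (θ * (1 - Γ / θ)) * Real.sqrt (2 / βlb)) *
            max (φ (P (x k) - Pstar)) (Real.sqrt (P (x (k - 1)) - Pstar))) := by
  have main : ∀ θ : ℝ, Γ < θ → ∀ k : ℕ, k₁ ≤ k →
      ‖x k - xstar‖ ≤
        (θ / (βlb * (1 - Γ / θ)) + Γ / (θ * (1 - Γ / θ)) * Real.sqrt (2 / βlb)) *
          max (φ (P (x k) - Pstar)) (Real.sqrt (P (x (k - 1)) - Pstar)) := by
    intro θ hθ k hk
    have hθ0 : (0:ℝ) < θ := hΓ.trans hθ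
    have hθne : θ ≠ 0 := ne_of_gt hθ0
    have hβne : βlb ≠ 0 := ne_of_gt hβlb
    have hδ : (0:ℝ) < 1 - Γ / θ := by
      rw [sub_pos, div_lt_one hθ0]; exact hθ
    set E : ℕ → ℝ := fun j => P (x j) - Pstar with hEdef
    set a : ℕ → ℝ := fun j => ‖x (j + 1) - x j‖ with hadef
    clear_value E a
    have ha0 : ∀ j, 0 ≤ a j := fun j => by simp only [hadef]; exact norm_nonneg _
    have hE0 : ∀ j, 0 < E j := fun j => by simp only [hEdef]; exact hpos j
    have hEstep : ∀ j, E (j + 1) ≤ E j := fun j => by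
      simp only [hEdef]; exact sub_le_sub_right (hmono j) Pstar
    have hstep : ∀ j, βlb / 2 * a j ^ 2 ≤ E j - E (j + 1) := by
      intro j
      have := hdesc j
      simp only [hEdef, hadef]
      linarith
    have hEτ : ∀ j, k₁ ≤ j → E j < τ := fun j hj => by
      rw [hEdef]; exact (hKL j hj).1
    -- key per-step estimate for j ≥ k₁
    have hkey : ∀ j, k₁ ≤ j →
        a j ≤ Γ / θ * a (j - 1) + θ / (2 * βlb) * (φ (E j) - φ (E (j + 1))) := by
      intro j hj
      have hj1 : 1 ≤ j := hk₁.trans hj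
      have hjj : j - 1 + 1 = j := Nat.succ_pred_eq_of_pos hj1
      have hmem : E j ∈ Set.Ioo (0:ℝ) τ := ⟨hE0 j, hEτ j hj⟩
      have hp : 0 < φ' (E j) := hφ'pos _ hmem
      have hΔ : φ' (E j) * (E j - E (j + 1)) ≤ φ (E j) - φ (E (j + 1)) := by
        rcases eq_or_lt_of_le (hEstep j) with h | h
        · rw [h]; simp
        · have hx1 : E (j + 1) ∈ Set.Ico (0:ℝ) τ :=
            ⟨(hE0 _).le, lt_of_le_of_lt (hEstep j) (hEτ j hj)⟩
          have hy1 : E j ∈ Set.Ico (0:ℝ) τ := ⟨(hE0 _).le, hEτ j hj⟩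
          have hsl := hφconc.le_slope_of_hasDerivAt hx1 hy1 h (hφderiv _ hmem)
          rw [slope_def_field, le_div_iff₀ (by linarith)] at hsl
          linarith
      have hΔ0 : 0 ≤ φ (E j) - φ (E (j + 1)) :=
        le_trans (mul_nonneg hp.le (by linarith [hEstep j])) hΔ
      have hg : ‖gradient P (x j)‖ ≤ Γ * a (j - 1) := by
        have := hgrad j hj1
        simpa only [hadef, hjj] using this
      have hKL2 : 1 ≤ φ' (E j) * ‖gradient P (x j)‖ := by
        rw [hEdef]; exact (hKL j hj).2
      have h1 : 1 ≤ φ' (E j) * (Γ * a (j - 1)) :=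
        le_trans hKL2 (mul_le_mul_of_nonneg_left hg hp.le)
      have hsq : βlb / 2 * a j ^ 2 ≤ (φ (E j) - φ (E (j + 1))) * (Γ * a (j - 1)) := by
        have h2 : E j - E (j + 1) ≤ (E j - E (j + 1)) * (φ' (E j) * (Γ * a (j - 1))) :=
          le_mul_of_one_le_right (by linarith [hEstep j]) h1
        have h4 : (φ' (E j) * (E j - E (j + 1))) * (Γ * a (j - 1)) ≤
            (φ (E j) - φ (E (j + 1))) * (Γ * a (j - 1)) :=
          mul_le_mul_of_nonneg_right hΔ (mul_nonneg hΓ.le (ha0 _))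
        calc βlb / 2 * a j ^ 2 ≤ E j - E (j + 1) := hstep j
          _ ≤ (E j - E (j + 1)) * (φ' (E j) * (Γ * a (j - 1))) := h2
          _ = (φ' (E j) * (E j - E (j + 1))) * (Γ * a (j - 1)) := by ring
          _ ≤ _ := h4
      set Δ : ℝ := φ (E j) - φ (E (j + 1)) with hΔdef
      have hsq' : a j ^ 2 ≤ 2 * Γ / βlb * (Δ * a (j - 1)) := by
        rw [div_mul_eq_mul_div, le_div_iff₀ hβlb]
        nlinarith [hsq]
      have hRnn : 0 ≤ Γ / θ * a (j - 1) + θ / (2 * βlb) * Δ :=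
        add_nonneg (mul_nonneg (div_nonneg hΓ.le hθ0.le) (ha0 _))
          (mul_nonneg (div_nonneg hθ0.le (by linarith)) hΔ0)
      refine le_of_pow_le_pow_left₀ two_ne_zero hRnn ?_
      have key5 : 4 * (Γ / θ) * (θ / (2 * βlb)) * (Δ * a (j - 1)) =
          2 * Γ / βlb * (Δ * a (j - 1)) := by
        have : 4 * (Γ / θ) * (θ / (2 * βlb)) = 2 * Γ / βlb := by
          field_simp; ring
        rw [this]
      nlinarith [sq_nonneg (Γ / θ * a (j - 1) - θ / (2 * βlb) * Δ), hsq', key5]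
    -- now fix k
    have hk1 : 1 ≤ k := hk₁.trans hk
    obtain ⟨m, rfl⟩ : ∃ m, k = m + 1 := ⟨k - 1, (Nat.succ_pred_eq_of_pos hk1).symm⟩
    set S : ℕ → ℝ := fun N => ∑ j ∈ Finset.range (N + 1), a (m + 1 + j) with hSdef
    have ht : ∀ j : ℕ, a (m + 1 + j) ≤
        Γ / θ * a (m + j) + θ / (2 * βlb) * (φ (E (m + 1 + j)) - φ (E (m + 1 + j + 1))) := by
      intro j
      have h := hkey (m + 1 + j) (by omega)
      have e1 : m + 1 + j - 1 = m + j := by omega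
      rwa [e1] at h
    have hsum : ∀ N, S N ≤ (Γ / θ * a m + θ / (2 * βlb) * φ (E (m + 1))) / (1 - Γ / θ) := by
      intro N
      have hsum1 : S N ≤ Γ / θ * (∑ j ∈ Finset.range (N + 1), a (m + j)) +
          θ / (2 * βlb) * (φ (E (m + 1)) - φ (E (m + 1 + (N + 1)))) := by
        have := Finset.sum_le_sum (fun j (_ : j ∈ Finset.range (N + 1)) => ht j)
        rw [Finset.sum_add_distrib, ← Finset.mul_sum, ← Finset.mul_sum] at this
        have htel : ∑ j ∈ Finset.range (N + 1),
            (φ (E (m + 1 + j)) - φ (E (m + 1 + j + 1))) =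
            φ (E (m + 1)) - φ (E (m + 1 + (N + 1))) := by
          have := Finset.sum_range_sub' (fun i => φ (E (m + 1 + i))) (N + 1)
          simpa [← add_assoc] using this
        rw [htel] at this
        exact this
      have hshift : (∑ j ∈ Finset.range (N + 1), a (m + j)) =
          a m + ∑ j ∈ Finset.range N, a (m + 1 + j) := by
        rw [Finset.sum_range_succ' (fun i => a (m + i)) N]
        simp only [Nat.add_zero]
        rw [add_comm]
        congr 1
        exact Finset.sum_congr rfl fun i _ => by rw [show m + (i + 1) = m + 1 + i by omega]
      have hTS : (∑ j ∈ Finset.range N, a (m + 1 + j)) ≤ S N := by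
        rw [hSdef]
        simp only
        rw [Finset.sum_range_succ]
        exact le_add_of_nonneg_right (ha0 _)
      have hφlast : 0 ≤ φ (E (m + 1 + (N + 1))) :=
        hφnonneg _ ⟨(hE0 _).le, hEτ _ (by omega)⟩
      have hc2 : 0 ≤ θ / (2 * βlb) := div_nonneg hθ0.le (by linarith)
      have hgnn : 0 ≤ Γ / θ := div_nonneg hΓ.le hθ0.le
      have : S N ≤ Γ / θ * (a m + S N) + θ / (2 * βlb) * φ (E (m + 1)) := by
        calc S N ≤ Γ / θ * (∑ j ∈ Finset.range (N + 1), a (m + j)) +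
            θ / (2 * βlb) * (φ (E (m + 1)) - φ (E (m + 1 + (N + 1)))) := hsum1
          _ ≤ Γ / θ * (a m + S N) + θ / (2 * βlb) * φ (E (m + 1)) := by
              have h1 : Γ / θ * (∑ j ∈ Finset.range (N + 1), a (m + j)) ≤
                  Γ / θ * (a m + S N) := by
                apply mul_le_mul_of_nonneg_left _ hgnn
                rw [hshift]
                linarith [hTS]
              nlinarith [mul_nonneg hc2 hφlast]
      rw [le_div_iff₀ hδ]
      nlinarith [this]
    have hdist : ∀ N, ‖x (m + 1) - x (m + 1 + (N + 1))‖ ≤ S N := by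
      intro N
      induction N with
      | zero =>
        have hS0 : S 0 = a (m + 1) := by rw [hSdef]; simp
        rw [hS0, norm_sub_rev]
        simp only [hadef]
        exact le_rfl
      | succ N ih =>
        have htri : ‖x (m + 1) - x (m + 1 + (N + 2))‖ ≤
            ‖x (m + 1) - x (m + 1 + (N + 1))‖ + ‖x (m + 1 + (N + 1)) - x (m + 1 + (N + 2))‖ := by
          rw [← sub_add_sub_cancel (x (m + 1)) (x (m + 1 + (N + 1))) (x (m + 1 + (N + 2)))]
          exact norm_add_le _ _
        have hS : S (N + 1) = S N + a (m + 1 + (N + 1)) := by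
          rw [hSdef]
          simp only
          rw [Finset.sum_range_succ]
        have hlast : ‖x (m + 1 + (N + 1)) - x (m + 1 + (N + 2))‖ = a (m + 1 + (N + 1)) := by
          rw [norm_sub_rev]
          simp only [hadef]
          rw [show m + 1 + (N + 2) = m + 1 + (N + 1) + 1 from by omega]
        rw [hS]
        rw [hlast] at htri
        linarith
    have hten : Tendsto (fun N : ℕ => ‖x (m + 1) - x (m + 1 + (N + 1))‖) atTop
        (𝓝 ‖x (m + 1) - xstar‖) := by
      have h1 : Tendsto (fun N : ℕ => m + 1 + (N + 1)) atTop atTop := by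
        apply tendsto_atTop_atTop_of_monotone
        · intro i j hij
          show m + 1 + (i + 1) ≤ m + 1 + (j + 1)
          omega
        · intro b
          refine ⟨b, ?_⟩
          show b ≤ m + 1 + (b + 1)
          omega
      exact (tendsto_const_nhds.sub (hlim.comp h1)).norm
    have hle : ‖x (m + 1) - xstar‖ ≤
        (Γ / θ * a m + θ / (2 * βlb) * φ (E (m + 1))) / (1 - Γ / θ) :=
      le_of_tendsto hten (Filter.Eventually.of_forall fun N => (hdist N).trans (hsum N))
    -- bound a m
    have ham : a m ≤ Real.sqrt (2 / βlb) * Real.sqrt (E m) := by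
      have h1 : a m ^ 2 ≤ 2 / βlb * E m := by
        rw [div_mul_eq_mul_div, le_div_iff₀ hβlb]
        nlinarith [hstep m, hE0 (m + 1)]
      calc a m = Real.sqrt (a m ^ 2) := (Real.sqrt_sq (ha0 m)).symm
        _ ≤ Real.sqrt (2 / βlb * E m) := Real.sqrt_le_sqrt h1
        _ = Real.sqrt (2 / βlb) * Real.sqrt (E m) := Real.sqrt_mul (by positivity) _
    -- final assembly
    have hgoal1 : P (x (m + 1)) - Pstar = E (m + 1) := by rw [hEdef]
    have hgoal2 : P (x (m + 1 - 1)) - Pstar = E m := by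
      rw [hEdef]
      norm_num
    rw [hgoal1, hgoal2]
    set mx : ℝ := max (φ (E (m + 1))) (Real.sqrt (E m)) with hmxdef
    have hmx1 : φ (E (m + 1)) ≤ mx := le_max_left _ _
    have hmx2 : Real.sqrt (E m) ≤ mx := le_max_right _ _
    have hmx0 : 0 ≤ mx := le_trans (Real.sqrt_nonneg _) hmx2
    set s : ℝ := Real.sqrt (2 / βlb) with hsdef
    have hs0 : 0 ≤ s := Real.sqrt_nonneg _
    have hnum : Γ / θ * a m + θ / (2 * βlb) * φ (E (m + 1)) ≤
        (Γ / θ * s + θ / (2 * βlb)) * mx := by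
      have ha1 : Γ / θ * a m ≤ Γ / θ * (s * mx) := by
        apply mul_le_mul_of_nonneg_left _ (div_nonneg hΓ.le hθ0.le)
        exact le_trans ham (mul_le_mul_of_nonneg_left hmx2 hs0)
      have ha2 : θ / (2 * βlb) * φ (E (m + 1)) ≤ θ / (2 * βlb) * mx :=
        mul_le_mul_of_nonneg_left hmx1 (div_nonneg hθ0.le (by linarith))
      nlinarith [ha1, ha2]
    have hMle : (Γ / θ * a m + θ / (2 * βlb) * φ (E (m + 1))) / (1 - Γ / θ) ≤
        ((Γ / θ * s + θ / (2 * βlb)) / (1 - Γ / θ)) * mx := by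
      rw [div_mul_eq_mul_div (Γ / θ * s + θ / (2 * βlb)) (1 - Γ / θ) mx]
      exact (div_le_div_iff_of_pos_right hδ).mpr hnum
    have hcoef : (Γ / θ * s + θ / (2 * βlb)) / (1 - Γ / θ) ≤
        θ / (βlb * (1 - Γ / θ)) + Γ / (θ * (1 - Γ / θ)) * s := by
      have e1 : (Γ / θ * s + θ / (2 * βlb)) / (1 - Γ / θ) =
          Γ / (θ * (1 - Γ / θ)) * s + θ / (2 * (βlb * (1 - Γ / θ))) := by
        rw [add_div, mul_div_right_comm, div_div, div_div, mul_assoc]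
      rw [e1]
      have e3 : θ / (2 * (βlb * (1 - Γ / θ))) ≤ θ / (βlb * (1 - Γ / θ)) := by
        apply div_le_div_of_nonneg_left hθ0.le (mul_pos hβlb hδ)
        nlinarith [mul_pos hβlb hδ]
      linarith
    calc ‖x (m + 1) - xstar‖ ≤
        (Γ / θ * a m + θ / (2 * βlb) * φ (E (m + 1))) / (1 - Γ / θ) := hle
      _ ≤ ((Γ / θ * s + θ / (2 * βlb)) / (1 - Γ / θ)) * mx := hMle
      _ ≤ (θ / (βlb * (1 - Γ / θ)) + Γ / (θ * (1 - Γ / θ)) * s) * mx :=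
          mul_le_mul_of_nonneg_right hcoef hmx0
  refine ⟨⟨_, ?_, main (Γ + 1) (by linarith)⟩, main⟩
  have hδ' : (0:ℝ) < 1 - Γ / (Γ + 1) := by
    rw [sub_pos, div_lt_one (by linarith)]; linarith
  have h1 : 0 < (Γ + 1) / (βlb * (1 - Γ / (Γ + 1))) :=
    div_pos (by linarith) (mul_pos hβlb hδ')
  have h2 : 0 ≤ Γ / ((Γ + 1) * (1 - Γ / (Γ + 1))) * Real.sqrt (2 / βlb) :=
    mul_nonneg (div_nonneg hΓ.le (mul_nonneg (by linarith) hδ'.le)) (Real.sqrt_nonneg _)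
  linarith
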